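/- For integers $2 \le k \le t$ and $n \ge 1$, there exists a balanced $t$-partite $k$-uniform hypergraph $H$ with each class of size $n$ satisfying $\widetilde{\delta}_{k-1}(H) = \lceil (t-k+1)n/t \rceil - 1$ that contains no perfect fractional $K_t^k$-matching. -/

import Mathlib

open Finset
open scoped Classical

/-- A set of vertices of the `t`-partite vertex set `Fin t × Fin n` is legal if it
meets each class in at most one vertex. -/
def Legal {t n : ℕ} (S : Finset (Fin t × Fin n)) : Prop :=
  ∀ u ∈ S, ∀ v ∈ S, u.1 = v.1 → u = v

/-- `H` is a `t`-partite `k`-uniform hypergraph with classes of size `n`. -/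
def IsPartiteKGraph (t n k : ℕ) (H : Finset (Finset (Fin t × Fin n))) : Prop :=
  ∀ e ∈ H, e.card = k ∧ Legal e

/-- The minimum partite codegree of `H` is at least `d`. -/
def CodegGE (t n k : ℕ) (H : Finset (Finset (Fin t × Fin n))) (d : ℝ) : Prop :=
  ∀ T : Finset (Fin t × Fin n), T.card = k - 1 → Legal T →
    ∀ j : Fin t, (∀ v ∈ T, v.1 ≠ j) →
      d ≤ ((Finset.univ.filter (fun x : Fin n => insert (j, x) T ∈ H)).card : ℝ)

/-- `S` spans a copy of the complete `k`-graph `K_t^k` in `H` (one vertex per class). -/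
def SpansClique (t n k : ℕ) (H : Finset (Finset (Fin t × Fin n)))
    (S : Finset (Fin t × Fin n)) : Prop :=
  S.card = t ∧ Legal S ∧ ∀ e ⊆ S, e.card = k → e ∈ H

/-- `M` is a perfect `K_t^k`-matching in `H`. -/
def IsPerfectKtMatching (t n k : ℕ) (H M : Finset (Finset (Fin t × Fin n))) : Prop :=
  (∀ S ∈ M, SpansClique t n k H S) ∧
  (M : Set (Finset (Fin t × Fin n))).PairwiseDisjoint id ∧
  ∀ v : Fin t × Fin n, ∃ S ∈ M, v ∈ S

/-- `w` is a perfect fractional `K_t^k`-matching of `H`. -/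
def IsPerfectFracMatching (t n k : ℕ) (H : Finset (Finset (Fin t × Fin n)))
    (w : Finset (Fin t × Fin n) → ℝ) : Prop :=
  (∀ S, 0 ≤ w S ∧ w S ≤ 1) ∧
  (∀ S, w S ≠ 0 → SpansClique t n k H S) ∧
  (∀ v : Fin t × Fin n, ∑ S ∈ Finset.univ.filter (fun S => v ∈ S), w S ≤ 1) ∧
  ∑ S : Finset (Fin t × Fin n), w S = (n : ℝ)

/-- Proposition 2.2: the lower bound construction for the fractional threshold. -/
theorem stmt1 (t n k : ℕ) (hk : 2 ≤ k) (hkt : k ≤ t) (hn : 1 ≤ n) :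
    ∃ H : Finset (Finset (Fin t × Fin n)), IsPartiteKGraph t n k H ∧
      -- the minimum partite codegree equals ⌈(t-k+1)n/t⌉ - 1 :
      CodegGE t n k H ((⌈(((t : ℝ) - k + 1) * n) / t⌉ : ℤ) - 1 : ℝ) ∧
      ¬ CodegGE t n k H ((⌈(((t : ℝ) - k + 1) * n) / t⌉ : ℤ) : ℝ) ∧
      ¬ ∃ w, IsPerfectFracMatching t n k H w := by
  classical
  have ht : 0 < t := lt_of_lt_of_le (by norm_num) (hkt.trans' hk)
  set x : ℝ := (((t : ℝ) - k + 1) * n) / t with hxdef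
  set c : ℤ := ⌈x⌉ with hcdef
  have htk : ((t - k + 1 : ℕ) : ℝ) = (t : ℝ) - k + 1 := by
    push_cast [Nat.cast_sub hkt]; ring
  have hxpos : 0 < x := by
    apply div_pos
    · apply mul_pos
      · have : (k : ℝ) ≤ t := by exact_mod_cast hkt
        linarith
      · exact_mod_cast hn
    · exact_mod_cast ht
  have hxlen : x ≤ n := by
    rw [hxdef, div_le_iff₀ (by exact_mod_cast ht)]
    have h1 : (t : ℝ) - k + 1 ≤ t := by
      have : (2 : ℝ) ≤ k := by exact_mod_cast hk
      linarith
    have h2 : (0 : ℝ) ≤ n := by positivity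
    nlinarith
  have hc1 : 1 ≤ c := Int.ceil_pos.mpr hxpos
  have hcn : c ≤ n := Int.ceil_le.mpr (by exact_mod_cast hxlen)
  set d : ℕ := (c - 1).toNat with hddef
  have hdz : (d : ℤ) = c - 1 := Int.toNat_of_nonneg (by omega)
  have hdn : d < n := by omega
  have hdR : (d : ℝ) = (c : ℝ) - 1 := by exact_mod_cast hdz
  -- the construction
  set H : Finset (Finset (Fin t × Fin n)) :=
    Finset.univ.filter (fun e => e.card = k ∧ Legal e ∧ ∃ v ∈ e, v.2.val < d) with hHdef
  have memH : ∀ e : Finset (Fin t × Fin n),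
      e ∈ H ↔ e.card = k ∧ Legal e ∧ ∃ v ∈ e, v.2.val < d := by
    intro e; simp [hHdef]
  -- the small set in one class
  set D : Finset (Fin n) := Finset.univ.filter (fun x : Fin n => x.val < d) with hDdef
  have hDeq : D = Finset.Iio (⟨d, hdn⟩ : Fin n) := by
    ext y; simp [hDdef, Finset.mem_Iio, Fin.lt_def]
  have hDcard : D.card = d := by rw [hDeq, Fin.card_Iio]
  set A : Finset (Fin t × Fin n) := Finset.univ.filter (fun v => v.2.val < d) with hAdef
  have hAeq : A = (Finset.univ : Finset (Fin t)) ×ˢ D := by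
    ext v; simp [hAdef, hDdef, Finset.mem_product]
  have hAcard : A.card = t * d := by
    rw [hAeq, Finset.card_product, hDcard]; simp
  refine ⟨H, ?_, ?_, ?_, ?_⟩
  · -- IsPartiteKGraph
    intro e he
    rw [memH] at he
    exact ⟨he.1, he.2.1⟩
  · -- CodegGE at c - 1
    intro T hTcard hTleg j hj
    have hsub : D ⊆ Finset.univ.filter (fun x : Fin n => insert (j, x) T ∈ H) := by
      intro y hy
      rw [hDdef, Finset.mem_filter] at hy
      rw [Finset.mem_filter]
      refine ⟨Finset.mem_univ _, ?_⟩
      rw [memH]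
      have hjT : (j, y) ∉ T := fun hmem => (hj _ hmem) rfl
      refine ⟨?_, ?_, ⟨(j, y), Finset.mem_insert_self _ _, hy.2⟩⟩
      · rw [Finset.card_insert_of_notMem hjT, hTcard]; omega
      · intro u hu v hv huv
        rcases Finset.mem_insert.mp hu with hu1 | hu2 <;>
          rcases Finset.mem_insert.mp hv with hv1 | hv2
        · rw [hu1, hv1]
        · exfalso; apply hj v hv2; rw [hu1] at huv; exact huv.symm
        · exfalso; apply hj u hu2; rw [hv1] at huv; exact huv
        · exact hTleg u hu2 v hv2 huv
    have := Finset.card_le_card hsub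
    rw [hDcard] at this
    calc ((c : ℝ) - 1) = (d : ℝ) := hdR.symm
    _ ≤ _ := by exact_mod_cast this
  · -- not CodegGE at c
    intro hcg
    have hlast : n - 1 < n := by omega
    set last : Fin n := ⟨n - 1, hlast⟩ with hlastdef
    set j0 : Fin t := ⟨0, ht⟩ with hj0def
    set b : Fin t := ⟨k - 1, by omega⟩ with hbdef
    set T : Finset (Fin t × Fin n) :=
      (Finset.Ioc j0 b).image (fun i => (i, last)) with hTdef
    have hmemT : ∀ v ∈ T, 0 < v.1.val ∧ v.2 = last := by
      intro v hv
      rw [hTdef, Finset.mem_image] at hv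
      obtain ⟨i, hi, rfl⟩ := hv
      rw [Finset.mem_Ioc] at hi
      exact ⟨hi.1, rfl⟩
    have hTcard : T.card = k - 1 := by
      rw [hTdef, Finset.card_image_of_injective _ (fun a b h => (Prod.mk.injEq _ _ _ _).mp h |>.1),
        Fin.card_Ioc]
      simp [hj0def, hbdef]
    have hTleg : Legal T := by
      intro u hu v hv _
      have h1 := (hmemT u hu).2
      have h2 := (hmemT v hv).2
      rw [hTdef, Finset.mem_image] at hu hv
      obtain ⟨i, _, rfl⟩ := hu
      obtain ⟨i', _, rfl⟩ := hv
      simp_all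
    have hjT : ∀ v ∈ T, v.1 ≠ j0 := by
      intro v hv heq
      have := (hmemT v hv).1
      rw [heq] at this
      simp [hj0def] at this
    have hbound := hcg T hTcard hTleg j0 hjT
    have hsub : Finset.univ.filter (fun x : Fin n => insert (j0, x) T ∈ H) ⊆ D := by
      intro y hy
      rw [Finset.mem_filter, memH] at hy
      obtain ⟨-, -, -, v, hv, hvd⟩ := hy
      rcases Finset.mem_insert.mp hv with hv1 | hv2
      · rw [hDdef, Finset.mem_filter]
        exact ⟨Finset.mem_univ _, by rw [hv1] at hvd; exact hvd⟩
      · exfalso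
        have := (hmemT v hv2).2
        rw [this] at hvd
        simp only [hlastdef] at hvd
        omega
    have hle := Finset.card_le_card hsub
    rw [hDcard] at hle
    have : (c : ℝ) ≤ (d : ℝ) := hbound.trans (by exact_mod_cast hle)
    rw [hdR] at this
    linarith
  · -- no perfect fractional matching
    rintro ⟨w, hw01, hwsp, hwdeg, hwsum⟩
    -- every clique meets A in at least t - k + 1 vertices
    have hclA : ∀ S : Finset (Fin t × Fin n), w S ≠ 0 → (t - k + 1 : ℕ) ≤ (A ∩ S).card := by
      intro S hS
      obtain ⟨hScard, hSleg, hScl⟩ := hwsp S hS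
      by_contra hlt
      push_neg at hlt
      have hAS : (S ∩ A).card ≤ t - k := by
        rw [Finset.inter_comm] at hlt; omega
      have hsd : k ≤ (S \ A).card := by
        have := Finset.card_inter_add_card_sdiff S A
        omega
      obtain ⟨e, hes, hecard⟩ := Finset.exists_subset_card_eq hsd
      have heH := hScl e (hes.trans (Finset.sdiff_subset)) hecard
      rw [memH] at heH
      obtain ⟨-, -, v, hv, hvd⟩ := heH
      have := hes hv
      rw [Finset.mem_sdiff, hAdef] at this
      exact this.2 (by simp [hvd])
    have hw0 : ∀ S, 0 ≤ w S := fun S => (hw01 S).1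
    -- double counting
    have key : ((t - k + 1 : ℕ) : ℝ) * n ≤ (t : ℝ) * d := by
      calc ((t - k + 1 : ℕ) : ℝ) * n
          = ∑ S : Finset (Fin t × Fin n), ((t - k + 1 : ℕ) : ℝ) * w S := by
            rw [← Finset.mul_sum, hwsum]
        _ ≤ ∑ S : Finset (Fin t × Fin n), ((A ∩ S).card : ℝ) * w S := by
            apply Finset.sum_le_sum
            intro S _
            rcases eq_or_ne (w S) 0 with h | h
            · simp [h]
            · exact mul_le_mul_of_nonneg_right (by exact_mod_cast hclA S h) (hw0 S)
        _ = ∑ S : Finset (Fin t × Fin n), ∑ v ∈ A, (if v ∈ S then w S else 0) := by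
            apply Finset.sum_congr rfl
            intro S _
            have hfe : A.filter (fun v => v ∈ S) = A ∩ S := by
              ext v; simp [Finset.mem_inter]
            rw [← Finset.sum_filter, hfe, Finset.sum_const, nsmul_eq_mul]
        _ = ∑ v ∈ A, ∑ S : Finset (Fin t × Fin n), (if v ∈ S then w S else 0) :=
            Finset.sum_comm
        _ = ∑ v ∈ A, ∑ S ∈ Finset.univ.filter (fun S => v ∈ S), w S := by
            apply Finset.sum_congr rfl
            intro v _
            rw [Finset.sum_filter]
        _ ≤ ∑ v ∈ A, (1 : ℝ) := Finset.sum_le_sum (fun v _ => hwdeg v)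
        _ = (t : ℝ) * d := by
            rw [Finset.sum_const, hAcard, nsmul_eq_mul]; push_cast; ring
    -- but t * d < (t - k + 1) * n
    have hdx : (d : ℝ) < x := by
      rw [hdR]
      have := Int.ceil_lt_add_one x
      have hcx : (c : ℝ) < x + 1 := by exact_mod_cast this
      linarith
    have htx : (t : ℝ) * x = ((t - k + 1 : ℕ) : ℝ) * n := by
      rw [htk, hxdef]
      field_simp
    have : (t : ℝ) * d < ((t - k + 1 : ℕ) : ℝ) * n := by
      rw [← htx]
      have : (0 : ℝ) < t := by exact_mod_cast ht
      nlinarith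
    linarith
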